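/- For every i ∈ ℤ, Q_i ≠ 0, Q_i divides N − P_i² exactly, and the identity N = P_i² + Q_i·Q_{i+1} holds in ℤ. (Theorem 2 (Riesel), parts (a) and (f): the pseudo-squares Q_i are integers and satisfy the fundamental identity.) -/
import Mathlib


/-- Two-sided continued fraction data of the normalized square root of `N`:
`N ≡ 1 (mod 4)` is positive and not a perfect square, `r = ⌊√N⌋`,
`P (-1) = r - 1` if `r` is even and `r` otherwise, `Q 0 = 2`, and the forward
(`i ≥ 0`) and backward (`i ≤ -1`) recursions (with `Int.fdiv` the floor
division on `ℤ`, so that `Int.fdiv x y = ⌊x / y⌋`). -/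
theorem stmt_0 (N : ℤ) (hNpos : 0 < N) (hN4 : N % 4 = 1) (hNsq : ¬ IsSquare N)
    (r : ℤ) (hr : r = ⌊Real.sqrt (N : ℝ)⌋)
    (P Q b : ℤ → ℤ)
    (hP1 : P (-1) = if 2 ∣ r then r - 1 else r)
    (hQ0 : Q 0 = 2)
    (hbf : ∀ i : ℤ, 0 ≤ i → b i = Int.fdiv (r + P (i - 1)) (Q i))
    (hPf : ∀ i : ℤ, 0 ≤ i → P i = b i * Q i - P (i - 1))
    (hQf : ∀ i : ℤ, 0 ≤ i → Q (i + 1) = Int.fdiv (N - P i ^ 2) (Q i))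
    (hQb : ∀ i : ℤ, i ≤ -1 → Q i = Int.fdiv (N - P i ^ 2) (Q (i + 1)))
    (hbb : ∀ i : ℤ, i ≤ -1 → b i = Int.fdiv (r + P i) (Q i))
    (hPb : ∀ i : ℤ, i ≤ -1 → P (i - 1) = b i * Q i - P i) :
    ∀ i : ℤ, Q i ≠ 0 ∧ Q i ∣ (N - P i ^ 2) ∧ N = P i ^ 2 + Q i * Q (i + 1) := by
  -- N is not a square of any integer
  have hns : ∀ p : ℤ, N - p ^ 2 ≠ 0 := by
    intro p h
    exact hNsq ⟨p, by rw [← pow_two]; linarith⟩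
  -- exact floor division
  have hfd : ∀ x q : ℤ, q ≠ 0 → q ∣ x → q * Int.fdiv x q = x := by
    rintro x q hq ⟨k, rfl⟩
    rw [Int.mul_fdiv_cancel_left _ hq]
  -- congruence: P' = c*q - P implies q ∣ N - P'^2 from q ∣ N - P^2
  have hcong : ∀ (q po pn c : ℤ), pn = c * q - po → q ∣ N - po ^ 2 → q ∣ N - pn ^ 2 := by
    intro q po pn c hpn hd
    have h : N - pn ^ 2 = (N - po ^ 2) + (po - pn) * (c * q) := by rw [hpn]; ring
    rw [h]
    exact dvd_add hd (Dvd.dvd.mul_left (dvd_mul_left q c) _)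
  -- base divisibility
  have hP1odd : ∃ k, P (-1) = 2 * k + 1 := by
    by_cases h2 : (2:ℤ) ∣ r
    · obtain ⟨k, hk⟩ := h2
      exact ⟨k - 1, by rw [hP1, if_pos ⟨k, hk⟩]; omega⟩
    · have hr1 : r % 2 = 1 := Int.two_dvd_ne_zero.mp h2
      exact ⟨r / 2, by rw [hP1, if_neg h2]; omega⟩
  have h0 : Q 0 ∣ N - P (-1) ^ 2 := by
    obtain ⟨k, hk⟩ := hP1odd
    rw [hQ0]
    exact ⟨(N - 1) / 2 - 2 * k ^ 2 - 2 * k, by rw [hk]; have : N = 2 * ((N-1)/2) + 1 := by omega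
                                               nlinarith [this]⟩
  -- forward step
  have fstep : ∀ i : ℤ, 0 ≤ i → Q i ≠ 0 → Q i ∣ N - P (i - 1) ^ 2 →
      Q i ∣ N - P i ^ 2 ∧ N = P i ^ 2 + Q i * Q (i + 1) ∧ Q (i + 1) ≠ 0 ∧
        Q (i + 1) ∣ N - P i ^ 2 := by
    intro i hi hq hd
    have hdm : Q i ∣ N - P i ^ 2 := hcong (Q i) (P (i - 1)) (P i) (b i) (hPf i hi) hd
    have hid : Q i * Q (i + 1) = N - P i ^ 2 := by
      rw [hQf i hi]; exact hfd _ _ hq hdm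
    refine ⟨hdm, by linarith, ?_, ⟨Q i, by rw [← hid]; ring⟩⟩
    intro h; rw [h, mul_zero] at hid; exact hns (P i) hid.symm
  -- backward step
  have bstep : ∀ i : ℤ, i ≤ -1 → Q (i + 1) ≠ 0 → Q (i + 1) ∣ N - P i ^ 2 →
      Q i ≠ 0 ∧ Q i ∣ N - P i ^ 2 ∧ N = P i ^ 2 + Q i * Q (i + 1) := by
    intro i hi hq hd
    have hid : Q (i + 1) * Q i = N - P i ^ 2 := by
      rw [hQb i hi]; exact hfd _ _ hq hd
    refine ⟨?_, ⟨Q (i + 1), by rw [← hid]; ring⟩, by linarith⟩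
    intro h; rw [h, mul_zero] at hid; exact hns (P i) hid.symm
  have hQ0ne : Q 0 ≠ 0 := by rw [hQ0]; norm_num
  -- forward invariant
  have F : ∀ n : ℕ, Q n ≠ 0 ∧ Q n ∣ N - P ((n : ℤ) - 1) ^ 2 := by
    intro n
    induction n with
    | zero => exact ⟨by simpa using hQ0ne, by simpa using h0⟩
    | succ m ih =>
      obtain ⟨hq, hd⟩ := ih
      obtain ⟨_, _, hq', hd'⟩ := fstep m (Int.natCast_nonneg m) hq hd
      constructor
      · push_cast; exact hq'
      · push_cast; simpa using hd'
  -- backward invariant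
  have B : ∀ n : ℕ, Q (-((n : ℤ) + 1)) ≠ 0 ∧ Q (-((n : ℤ) + 1)) ∣ N - P (-((n : ℤ) + 1)) ^ 2 ∧
      N = P (-((n : ℤ) + 1)) ^ 2 + Q (-((n : ℤ) + 1)) * Q (-((n : ℤ) + 1) + 1) := by
    intro n
    induction n with
    | zero =>
      have h := bstep (-1) (by norm_num)
        (by rw [show (-1 : ℤ) + 1 = 0 by ring]; exact hQ0ne)
        (by rw [show (-1 : ℤ) + 1 = 0 by ring]; exact h0)
      simpa using h
    | succ m ih =>
      obtain ⟨hq, hd, _⟩ := ih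
      have hm1 : -((m : ℤ) + 1) ≤ -1 := by omega
      have hd2 : Q (-((m : ℤ) + 1)) ∣ N - P (-((m : ℤ) + 1) - 1) ^ 2 :=
        hcong _ (P (-((m : ℤ) + 1))) _ (b (-((m : ℤ) + 1))) (hPb _ hm1) hd
      have h := bstep (-((m : ℤ) + 1) - 1) (by omega)
        (by rw [show -((m : ℤ) + 1) - 1 + 1 = -((m : ℤ) + 1) by ring]; exact hq)
        (by rw [show -((m : ℤ) + 1) - 1 + 1 = -((m : ℤ) + 1) by ring]; exact hd2)
      have e1 : -((((m + 1 : ℕ)) : ℤ) + 1) = -((m : ℤ) + 1) - 1 := by push_cast; ring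
      rw [e1]
      exact h
  intro i
  rcases le_or_gt 0 i with hi | hi
  · obtain ⟨hq, hd⟩ := F i.toNat
    rw [Int.toNat_of_nonneg hi] at hq hd
    obtain ⟨h1, h2, _, _⟩ := fstep i hi hq hd
    exact ⟨hq, h1, h2⟩
  · obtain ⟨h1, h2, h3⟩ := B (-i - 1).toNat
    have hn : -(((-i - 1).toNat : ℤ) + 1) = i := by
      rw [Int.toNat_of_nonneg (by omega)]; ring
    rw [hn] at h1 h2 h3
    exact ⟨h1, h2, h3⟩
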